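/- (Corollary 1, part b) Under Assumptions 1 and 2, let the GTT stepsize satisfy 0 < γ < 2/L, define ρ := max{|1−γm|, |1−γL|} and σ := 1 + h·(C₀C₁/m² + C₂/m), and suppose ρ^τ·σ < 1. Then the GTT iterates satisfy limsup_{k→∞} ‖x_k − x*(t_k)‖ ≤ (ρ^τ·h² / (2·(1 − ρ^τσ)))·(C₀²C₁/m³ + 2C₀C₂/m² + C₃/m), i.e. an asymptotic tracking error of order O(h²). -/

import Mathlib

noncomputable section

/-- The setting of a time-varying, smooth, strongly convex optimization problem
`min_{x ∈ ℝⁿ} f(x;t)`, bundling the objective `f`, its derivatives, the Hessian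
inverse, the optimal trajectory `x*(t)`, and Assumptions 1 and 2 of the paper. -/
structure TVOpt (n : ℕ) where
  /-- the objective `f(x;t)` -/
  f : EuclideanSpace ℝ (Fin n) → ℝ → ℝ
  /-- the gradient `∇ₓ f(x;t)` -/
  grad : EuclideanSpace ℝ (Fin n) → ℝ → EuclideanSpace ℝ (Fin n)
  /-- the Hessian `∇ₓₓ f(x;t)` -/
  hess : EuclideanSpace ℝ (Fin n) → ℝ →
    EuclideanSpace ℝ (Fin n) →L[ℝ] EuclideanSpace ℝ (Fin n)
  /-- the Hessian inverse `[∇ₓₓ f(x;t)]⁻¹` -/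
  hessInv : EuclideanSpace ℝ (Fin n) → ℝ →
    EuclideanSpace ℝ (Fin n) →L[ℝ] EuclideanSpace ℝ (Fin n)
  /-- the mixed partial derivative `∇_{tx} f(x;t)` -/
  dtgrad : EuclideanSpace ℝ (Fin n) → ℝ → EuclideanSpace ℝ (Fin n)
  /-- the third derivative tensor `∇ₓₓₓ f(x;t)` -/
  d3 : EuclideanSpace ℝ (Fin n) → ℝ →
    EuclideanSpace ℝ (Fin n) →L[ℝ] EuclideanSpace ℝ (Fin n) →L[ℝ] EuclideanSpace ℝ (Fin n)
  /-- the time derivative of the Hessian `∇_{xtx} f(x;t)` -/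
  dthess : EuclideanSpace ℝ (Fin n) → ℝ →
    EuclideanSpace ℝ (Fin n) →L[ℝ] EuclideanSpace ℝ (Fin n)
  /-- the second time derivative of the gradient `∇_{ttx} f(x;t)` -/
  dttgrad : EuclideanSpace ℝ (Fin n) → ℝ → EuclideanSpace ℝ (Fin n)
  /-- the optimal trajectory `x*(t)` -/
  xstar : ℝ → EuclideanSpace ℝ (Fin n)
  /-- strong convexity constant -/
  m : ℝ
  /-- Hessian norm bound (gradient Lipschitz constant) -/
  L : ℝ
  C0 : ℝ
  C1 : ℝ
  C2 : ℝ
  C3 : ℝ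
  m_pos : 0 < m
  grad_spec : ∀ (x : EuclideanSpace ℝ (Fin n)) (t : ℝ), HasGradientAt (fun y => f y t) (grad x t) x
  hess_spec : ∀ (x : EuclideanSpace ℝ (Fin n)) (t : ℝ), HasFDerivAt (fun y => grad y t) (hess x t) x
  dtgrad_spec : ∀ (x : EuclideanSpace ℝ (Fin n)) (t : ℝ), HasDerivAt (fun s => grad x s) (dtgrad x t) t
  d3_spec : ∀ (x : EuclideanSpace ℝ (Fin n)) (t : ℝ), HasFDerivAt (fun y => hess y t) (d3 x t) x
  dthess_spec : ∀ (x : EuclideanSpace ℝ (Fin n)) (t : ℝ), HasDerivAt (fun s => hess x s) (dthess x t) t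
  dttgrad_spec : ∀ (x : EuclideanSpace ℝ (Fin n)) (t : ℝ), HasDerivAt (fun s => dtgrad x s) (dttgrad x t) t
  /-- Assumption 1: `∇ₓₓ f(x;t) ⪰ m·I` uniformly in `x` and `t`. -/
  strong_convex : ∀ (x : EuclideanSpace ℝ (Fin n)) (t : ℝ) (v : EuclideanSpace ℝ (Fin n)),
    m * ‖v‖ ^ 2 ≤ @inner ℝ _ _ v (hess x t v)
  hessInv_left : ∀ (x : EuclideanSpace ℝ (Fin n)) (t : ℝ), ContinuousLinearMap.comp (hessInv x t) (hess x t) =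
    ContinuousLinearMap.id ℝ (EuclideanSpace ℝ (Fin n))
  hessInv_right : ∀ (x : EuclideanSpace ℝ (Fin n)) (t : ℝ), ContinuousLinearMap.comp (hess x t) (hessInv x t) =
    ContinuousLinearMap.id ℝ (EuclideanSpace ℝ (Fin n))
  /-- Assumption 2: bounded derivatives, uniformly in `x` and `t`. -/
  hess_bound : ∀ (x : EuclideanSpace ℝ (Fin n)) (t : ℝ), ‖hess x t‖ ≤ L
  dtgrad_bound : ∀ (x : EuclideanSpace ℝ (Fin n)) (t : ℝ), ‖dtgrad x t‖ ≤ C0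
  d3_bound : ∀ (x : EuclideanSpace ℝ (Fin n)) (t : ℝ), ‖d3 x t‖ ≤ C1
  dthess_bound : ∀ (x : EuclideanSpace ℝ (Fin n)) (t : ℝ), ‖dthess x t‖ ≤ C2
  dttgrad_bound : ∀ (x : EuclideanSpace ℝ (Fin n)) (t : ℝ), ‖dttgrad x t‖ ≤ C3
  /-- `x*(t)` minimizes `f(·;t)` -/
  xstar_min : ∀ t : ℝ, IsMinOn (fun x => f x t) Set.univ (xstar t)
  /-- equivalently, `∇ₓ f(x*(t);t) = 0` -/
  xstar_grad : ∀ t : ℝ, grad (xstar t) t = 0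

section GTTaux
open Filter Set Topology
/-- MVT: global derivative bound gives Lipschitz estimate. -/
lemma gtt_lip_fderiv {F G : Type*} [NormedAddCommGroup F] [NormedSpace ℝ F]
    [NormedAddCommGroup G] [NormedSpace ℝ G]
    {f : F → G} {f' : F → F →L[ℝ] G} (hf : ∀ z, HasFDerivAt f (f' z) z)
    {C : ℝ} (hC : ∀ z, ‖f' z‖ ≤ C) (x y : F) : ‖f y - f x‖ ≤ C * ‖y - x‖ :=
  (convex_univ).norm_image_sub_le_of_norm_hasFDerivWithin_le
    (fun z _ => (hf z).hasFDerivWithinAt) (fun z _ => hC z) trivial trivial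

lemma gtt_lip_deriv {G : Type*} [NormedAddCommGroup G] [NormedSpace ℝ G]
    {f f' : ℝ → G} (hf : ∀ s, HasDerivAt f (f' s) s)
    {C : ℝ} (hC : ∀ s, ‖f' s‖ ≤ C) (x y : ℝ) : ‖f y - f x‖ ≤ C * ‖y - x‖ :=
  (convex_univ).norm_image_sub_le_of_norm_hasDerivWithin_le
    (fun z _ => (hf z).hasDerivWithinAt) (fun z _ => hC z) trivial trivial

/-- Second-order Taylor estimate via FTC. -/
lemma gtt_taylor2 {G : Type*} [NormedAddCommGroup G] [NormedSpace ℝ G] [CompleteSpace G]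
    {f f' : ℝ → G} (hf : ∀ s, HasDerivAt f (f' s) s) (hc : Continuous f')
    {a b C : ℝ} (hab : a ≤ b) (hC : 0 ≤ C)
    (hbound : ∀ s ∈ Set.Icc a b, ‖f' s - f' a‖ ≤ C * (s - a)) :
    ‖f b - f a - (b - a) • f' a‖ ≤ C * (b - a) ^ 2 / 2 := by
  have hg : ∀ s, HasDerivAt (fun u => f u - u • f' a) (f' s - f' a) s := by
    intro s
    have h1 : HasDerivAt (fun u : ℝ => u • f' a) ((1 : ℝ) • f' a) s :=
      (hasDerivAt_id s).smul_const (f' a)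
    rw [one_smul] at h1
    exact (hf s).sub h1
  have hint : IntervalIntegrable (fun s => f' s - f' a) MeasureTheory.volume a b :=
    (hc.sub continuous_const).intervalIntegrable a b
  have key : (∫ s in a..b, (f' s - f' a)) = (f b - b • f' a) - (f a - a • f' a) :=
    intervalIntegral.integral_eq_sub_of_hasDerivAt (fun s _ => hg s) hint
  have heq : f b - f a - (b - a) • f' a = ∫ s in a..b, (f' s - f' a) := by
    rw [key, sub_smul]; abel
  rw [heq]
  have hbd : ‖∫ s in a..b, (f' s - f' a)‖ ≤ |∫ s in a..b, C * (s - a)| := by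
    apply intervalIntegral.norm_integral_le_abs_of_norm_le
    · have hsub : Set.uIoc a b ⊆ Set.Icc a b := by
        rw [Set.uIoc_of_le hab]; exact Set.Ioc_subset_Icc_self
      filter_upwards [MeasureTheory.ae_restrict_mem measurableSet_uIoc] with s hs
      exact hbound s (hsub hs)
    · exact (continuous_const.mul (continuous_id.sub continuous_const)).intervalIntegrable a b
  have hval : (∫ s in a..b, C * (s - a)) = C * (b - a) ^ 2 / 2 := by
    rw [intervalIntegral.integral_const_mul]
    have : (∫ s in a..b, (s - a)) = (b - a) ^ 2 / 2 := by
      rw [intervalIntegral.integral_comp_sub_right (fun x => x) a, integral_id]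
      ring
    rw [this]; ring
  rw [hval] at hbd
  calc ‖∫ s in a..b, (f' s - f' a)‖ ≤ |C * (b - a) ^ 2 / 2| := hbd
    _ = C * (b - a) ^ 2 / 2 := by
        rw [abs_of_nonneg]; positivity

end GTTaux
section GTTspec
open Filter Set Topology
/-- Sharp norm bound for `I - γH` for a symmetric positive operator. -/
lemma gtt_contract {n : ℕ} (H : EuclideanSpace ℝ (Fin n) →L[ℝ] EuclideanSpace ℝ (Fin n))
    (hsym : ∀ v w, @inner ℝ _ _ (H v) w = @inner ℝ _ _ v (H w))
    {m L γ : ℝ} (hm : ∀ v : EuclideanSpace ℝ (Fin n), m * ‖v‖ ^ 2 ≤ @inner ℝ _ _ v (H v))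
    (hL : ‖H‖ ≤ L) (hγ : 0 ≤ γ)
    (u : EuclideanSpace ℝ (Fin n)) :
    ‖u - γ • H u‖ ≤ max |1 - γ * m| |1 - γ * L| * ‖u‖ := by
  set ρ := max |1 - γ * m| |1 - γ * L| with hρdef
  have hρ0 : 0 ≤ ρ := le_trans (abs_nonneg _) (le_max_left _ _)
  have hTsym : (H : EuclideanSpace ℝ (Fin n) →ₗ[ℝ] EuclideanSpace ℝ (Fin n)).IsSymmetric :=
    fun v w => hsym v w
  have hn : Module.finrank ℝ (EuclideanSpace ℝ (Fin n)) = n := finrank_euclideanSpace_fin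
  set B := hTsym.eigenvectorBasis hn with hB
  set μ := hTsym.eigenvalues hn with hμ
  have hdiag : ∀ (v : EuclideanSpace ℝ (Fin n)) i, B.repr (H v) i = μ i * B.repr v i := by
    intro v i
    exact hTsym.eigenvectorBasis_apply_self_apply hn v i
  have hnorm1 : ∀ i, ‖B i‖ = 1 := fun i => B.orthonormal.1 i
  have happly : ∀ i, H (B i) = μ i • B i := fun i => hTsym.apply_eigenvectorBasis hn i
  have hμmem : ∀ i, m ≤ μ i ∧ μ i ≤ L := by
    intro i
    have hBi : @inner ℝ _ _ (B i) (H (B i)) = μ i := by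
      rw [happly i, real_inner_smul_right, real_inner_self_eq_norm_sq, hnorm1, one_pow, mul_one]
    have hlow : m ≤ μ i := by
      have := hm (B i); rw [hBi, hnorm1, one_pow, mul_one] at this; exact this
    have hup : μ i ≤ L := by
      have h1 : @inner ℝ _ _ (B i) (H (B i)) ≤ ‖B i‖ * ‖H (B i)‖ := real_inner_le_norm _ _
      have h2 : ‖H (B i)‖ ≤ ‖H‖ * ‖B i‖ := H.le_opNorm _
      rw [hBi] at h1
      rw [hnorm1] at h1 h2
      simp only [one_mul, mul_one] at h1 h2
      exact h1.trans (h2.trans hL)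
    exact ⟨hlow, hup⟩
  have hcoord : ∀ i, B.repr (u - γ • H u) i = (1 - γ * μ i) * B.repr u i := by
    intro i
    rw [map_sub, map_smul]
    simp only [PiLp.sub_apply, PiLp.smul_apply, smul_eq_mul, hdiag u i]
    ring
  have hfac : ∀ i, |1 - γ * μ i| ≤ ρ := by
    intro i
    rcases hμmem i with ⟨h1, h2⟩
    rw [abs_le]
    constructor
    · calc -ρ ≤ -|1 - γ * L| := by simp [hρdef]
        _ ≤ 1 - γ * L := neg_abs_le _
        _ ≤ 1 - γ * μ i := by nlinarith
    · calc 1 - γ * μ i ≤ 1 - γ * m := by nlinarith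
        _ ≤ |1 - γ * m| := le_abs_self _
        _ ≤ ρ := le_max_left _ _
  -- compare norms through the isometry B.repr
  have hiso1 : ‖u - γ • H u‖ = ‖B.repr (u - γ • H u)‖ := (B.repr.norm_map _).symm
  have hiso2 : ‖u‖ = ‖B.repr u‖ := (B.repr.norm_map _).symm
  rw [hiso1, hiso2, EuclideanSpace.norm_eq, EuclideanSpace.norm_eq]
  have hsum : (∑ i, ‖B.repr (u - γ • H u) i‖ ^ 2) ≤ ρ ^ 2 * ∑ i, ‖B.repr u i‖ ^ 2 := by
    rw [Finset.mul_sum]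
    apply Finset.sum_le_sum
    intro i _
    rw [hcoord i, Real.norm_eq_abs, Real.norm_eq_abs, abs_mul]
    calc (|1 - γ * μ i| * |B.repr u i|) ^ 2 = |1 - γ * μ i| ^ 2 * |B.repr u i| ^ 2 := by ring
      _ ≤ ρ ^ 2 * |B.repr u i| ^ 2 :=
          mul_le_mul_of_nonneg_right (pow_le_pow_left₀ (abs_nonneg _) (hfac i) 2) (by positivity)
  calc Real.sqrt (∑ i, ‖B.repr (u - γ • H u) i‖ ^ 2)
      ≤ Real.sqrt (ρ ^ 2 * ∑ i, ‖B.repr u i‖ ^ 2) := Real.sqrt_le_sqrt hsum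
    _ = ρ * Real.sqrt (∑ i, ‖B.repr u i‖ ^ 2) := by
        rw [Real.sqrt_mul (sq_nonneg ρ), Real.sqrt_sq hρ0]

end GTTspec
section GTTlemmas

open Filter Set Topology

variable {n : ℕ} (P : TVOpt n)

namespace TVOpt

lemma m_nonneg : 0 ≤ P.m := P.m_pos.le
lemma C0_nonneg : 0 ≤ P.C0 := (norm_nonneg _).trans (P.dtgrad_bound 0 0)
lemma C1_nonneg : 0 ≤ P.C1 := le_trans (norm_nonneg (P.d3 0 0)) (P.d3_bound 0 0)
lemma C2_nonneg : 0 ≤ P.C2 := (norm_nonneg _).trans (P.dthess_bound 0 0)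
lemma C3_nonneg : 0 ≤ P.C3 := (norm_nonneg _).trans (P.dttgrad_bound 0 0)

lemma hess_apply_inv (x : EuclideanSpace ℝ (Fin n)) (t : ℝ) (w : EuclideanSpace ℝ (Fin n)) :
    P.hess x t (P.hessInv x t w) = w := by
  have := P.hessInv_right x t
  have h2 := congrArg (fun (A : EuclideanSpace ℝ (Fin n) →L[ℝ] EuclideanSpace ℝ (Fin n)) => A w) this
  simpa using h2

lemma inv_apply_hess (x : EuclideanSpace ℝ (Fin n)) (t : ℝ) (w : EuclideanSpace ℝ (Fin n)) :
    P.hessInv x t (P.hess x t w) = w := by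
  have := P.hessInv_left x t
  have h2 := congrArg (fun (A : EuclideanSpace ℝ (Fin n) →L[ℝ] EuclideanSpace ℝ (Fin n)) => A w) this
  simpa using h2

/-- `‖H⁻¹‖ ≤ 1/m`. -/
lemma hessInv_norm (x : EuclideanSpace ℝ (Fin n)) (t : ℝ) :
    ‖P.hessInv x t‖ ≤ 1 / P.m := by
  apply ContinuousLinearMap.opNorm_le_bound _ (by have := P.m_pos; positivity)
  intro w
  set v := P.hessInv x t w with hv
  have hlow : P.m * ‖v‖ ^ 2 ≤ @inner ℝ _ _ v (P.hess x t v) := P.strong_convex x t v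
  have hcs : @inner ℝ _ _ v (P.hess x t v) ≤ ‖v‖ * ‖P.hess x t v‖ := real_inner_le_norm _ _
  have hHv : P.hess x t v = w := P.hess_apply_inv x t w
  rw [hHv] at hlow hcs
  have hkey : P.m * ‖v‖ ^ 2 ≤ ‖v‖ * ‖w‖ := hlow.trans hcs
  rcases eq_or_lt_of_le (norm_nonneg v) with h0 | h0
  · rw [← h0]
    have hm := P.m_pos
    positivity
  · rw [div_mul_eq_mul_div, le_div_iff₀ P.m_pos]
    nlinarith

/-- `hess` is `C₁`-Lipschitz in `x`. -/
lemma hess_lip_x (t : ℝ) (x y : EuclideanSpace ℝ (Fin n)) :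
    ‖P.hess y t - P.hess x t‖ ≤ P.C1 * ‖y - x‖ :=
  gtt_lip_fderiv (fun z => P.d3_spec z t) (fun z => P.d3_bound z t) x y

/-- `hess` is `C₂`-Lipschitz in `t`. -/
lemma hess_lip_t (x : EuclideanSpace ℝ (Fin n)) (s t : ℝ) :
    ‖P.hess x s - P.hess x t‖ ≤ P.C2 * |s - t| := by
  have := gtt_lip_deriv (fun u => P.dthess_spec x u) (fun u => P.dthess_bound x u) t s
  rwa [Real.norm_eq_abs] at this

/-- `dtgrad` is `C₃`-Lipschitz in `t`. -/
lemma dtgrad_lip_t (x : EuclideanSpace ℝ (Fin n)) (s t : ℝ) :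
    ‖P.dtgrad x s - P.dtgrad x t‖ ≤ P.C3 * |s - t| := by
  have := gtt_lip_deriv (fun u => P.dttgrad_spec x u) (fun u => P.dttgrad_bound x u) t s
  rwa [Real.norm_eq_abs] at this

/-- `dtgrad` is `C₂`-Lipschitz in `x` (by exchanging limits). -/
lemma dtgrad_lip_x (t : ℝ) (x y : EuclideanSpace ℝ (Fin n)) :
    ‖P.dtgrad y t - P.dtgrad x t‖ ≤ P.C2 * ‖y - x‖ := by
  have hD : HasDerivAt (fun s => P.grad y s - P.grad x s) (P.dtgrad y t - P.dtgrad x t) t :=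
    (P.dtgrad_spec y t).sub (P.dtgrad_spec x t)
  have hslope := hasDerivAt_iff_tendsto_slope.mp hD
  have hbound : ∀ s : ℝ, s ≠ t →
      ‖slope (fun s => P.grad y s - P.grad x s) t s‖ ≤ P.C2 * ‖y - x‖ := by
    intro s hs
    have hΦ : ∀ z : EuclideanSpace ℝ (Fin n),
        HasFDerivAt (fun z => P.grad z s - P.grad z t) (P.hess z s - P.hess z t) z :=
      fun z => (P.hess_spec z s).sub (P.hess_spec z t)
    have hΦb : ∀ z : EuclideanSpace ℝ (Fin n), ‖P.hess z s - P.hess z t‖ ≤ P.C2 * |s - t| :=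
      fun z => P.hess_lip_t z s t
    have hlip := gtt_lip_fderiv hΦ hΦb x y
    have hse : slope (fun s => P.grad y s - P.grad x s) t s =
        (s - t)⁻¹ • ((P.grad y s - P.grad x s) - (P.grad y t - P.grad x t)) := by
      simp [slope_def_module]
    rw [hse, norm_smul, Real.norm_eq_abs, abs_inv]
    have heq : (P.grad y s - P.grad x s) - (P.grad y t - P.grad x t) =
        (P.grad y s - P.grad y t) - (P.grad x s - P.grad x t) := by abel
    rw [heq]
    have hst : (0:ℝ) < |s - t| := abs_pos.mpr (sub_ne_zero.mpr hs)
    calc |s - t|⁻¹ * ‖(P.grad y s - P.grad y t) - (P.grad x s - P.grad x t)‖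
        ≤ |s - t|⁻¹ * (P.C2 * |s - t| * ‖y - x‖) := by
          apply mul_le_mul_of_nonneg_left _ (by positivity)
          exact hlip
      _ = P.C2 * ‖y - x‖ := by
          field_simp
  have hnorm : Tendsto (fun s => ‖slope (fun s => P.grad y s - P.grad x s) t s‖) (𝓝[≠] t)
      (𝓝 ‖P.dtgrad y t - P.dtgrad x t‖) := hslope.norm
  refine le_of_tendsto hnorm ?_
  filter_upwards [self_mem_nhdsWithin] with s hs
  exact hbound s hs

/-- Symmetry of the Hessian. -/
lemma hess_symm (x : EuclideanSpace ℝ (Fin n)) (t : ℝ) (v w : EuclideanSpace ℝ (Fin n)) :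
    @inner ℝ _ _ (P.hess x t v) w = @inner ℝ _ _ v (P.hess x t w) := by
  set F' : EuclideanSpace ℝ (Fin n) → (EuclideanSpace ℝ (Fin n) →L[ℝ] ℝ) :=
    fun z => innerSL ℝ (P.grad z t) with hF'
  have hf : ∀ z, HasFDerivAt (fun z => P.f z t) (F' z) z := by
    intro z
    have h1 : HasFDerivAt (fun z => P.f z t)
        (InnerProductSpace.toDual ℝ (EuclideanSpace ℝ (Fin n)) (P.grad z t)) z :=
      hasGradientAt_iff_hasFDerivAt.mp (P.grad_spec z t)
    refine h1.congr_fderiv ?_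
    apply ContinuousLinearMap.ext
    intro u
    simp [hF', InnerProductSpace.toDual_apply_apply, innerSL_apply_apply]
  have hx : HasFDerivAt F'
      ((innerSL ℝ (E := EuclideanSpace ℝ (Fin n))).comp (P.hess x t)) x := by
    exact (innerSL ℝ (E := EuclideanSpace ℝ (Fin n))).hasFDerivAt.comp x (P.hess_spec x t)
  have hsym := second_derivative_symmetric hf hx v w
  simp only [ContinuousLinearMap.comp_apply, innerSL_apply_apply] at hsym
  rw [hsym, real_inner_comm]

/-- Strong monotonicity: distance to opt is controlled by the gradient norm. -/
lemma dist_le_grad (y : EuclideanSpace ℝ (Fin n)) (t : ℝ) :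
    ‖y - P.xstar t‖ ≤ ‖P.grad y t‖ / P.m := by
  set u := y - P.xstar t with hu
  rcases eq_or_ne u 0 with h0 | h0
  · rw [h0, norm_zero]
    have hm := P.m_pos
    positivity
  have hkey : P.m * ‖u‖ ^ 2 ≤ @inner ℝ _ _ u (P.grad y t) := by
    set c : ℝ → EuclideanSpace ℝ (Fin n) := fun s => P.xstar t + s • u with hc
    have hcd : ∀ s : ℝ, HasDerivAt c u s := by
      intro s
      have h1 : HasDerivAt (fun s : ℝ => s • u) ((1:ℝ) • u) s := (hasDerivAt_id s).smul_const u
      rw [one_smul] at h1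
      exact h1.const_add _
    have hφ : ∀ s : ℝ, HasDerivAt (fun s => (@inner ℝ _ _ u (P.grad (c s) t) : ℝ))
        (@inner ℝ _ _ u (P.hess (c s) t u)) s := by
      intro s
      have hg : HasDerivAt (fun s => P.grad (c s) t) (P.hess (c s) t u) s :=
        (P.hess_spec (c s) t).comp_hasDerivAt s (hcd s)
      have := (hasDerivAt_const s u).inner ℝ hg
      simpa using this
    set χ : ℝ → ℝ := fun s => (@inner ℝ _ _ u (P.grad (c s) t) : ℝ) - s * (P.m * ‖u‖ ^ 2)
      with hχ
    have hχd : ∀ s : ℝ, HasDerivAt χ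
        (@inner ℝ _ _ u (P.hess (c s) t u) - P.m * ‖u‖ ^ 2) s := by
      intro s
      have h1 : HasDerivAt (fun s : ℝ => s * (P.m * ‖u‖ ^ 2)) (P.m * ‖u‖ ^ 2) s := by
        simpa using (hasDerivAt_id s).mul_const (P.m * ‖u‖ ^ 2)
      exact (hφ s).sub h1
    have hmono : Monotone χ := by
      apply monotone_of_deriv_nonneg
      · intro s
        exact (hχd s).differentiableAt
      · intro s
        rw [(hχd s).deriv]
        have := P.strong_convex (c s) t u
        linarith
    have h01 := hmono (by norm_num : (0:ℝ) ≤ 1)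
    have hc0 : c 0 = P.xstar t := by simp [hc]
    have hc1 : c 1 = y := by
      simp [hc, hu]
    rw [hχ] at h01
    simp only [hc0, hc1, zero_mul, one_mul, sub_zero] at h01
    rw [P.xstar_grad t] at h01
    simp only [inner_zero_right] at h01
    linarith
  have hcs : @inner ℝ _ _ u (P.grad y t) ≤ ‖u‖ * ‖P.grad y t‖ := real_inner_le_norm _ _
  have hu0 : 0 < ‖u‖ := norm_pos_iff.mpr h0
  rw [le_div_iff₀ P.m_pos]
  nlinarith

lemma gmap_lip (t : ℝ) {γ : ℝ} (hγ : 0 ≤ γ) (x y : EuclideanSpace ℝ (Fin n)) :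
    ‖(y - γ • P.grad y t) - (x - γ • P.grad x t)‖ ≤
      max |1 - γ * P.m| |1 - γ * P.L| * ‖y - x‖ := by
  set ρ := max |1 - γ * P.m| |1 - γ * P.L| with hρ
  have hd : ∀ z : EuclideanSpace ℝ (Fin n),
      HasFDerivAt (fun y => y - γ • P.grad y t)
        (ContinuousLinearMap.id ℝ (EuclideanSpace ℝ (Fin n)) - γ • P.hess z t) z := by
    intro z
    exact (hasFDerivAt_id z).sub ((P.hess_spec z t).const_smul γ)
  have hb : ∀ z : EuclideanSpace ℝ (Fin n),
      ‖ContinuousLinearMap.id ℝ (EuclideanSpace ℝ (Fin n)) - γ • P.hess z t‖ ≤ ρ := by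
    intro z
    apply ContinuousLinearMap.opNorm_le_bound _
      (le_trans (abs_nonneg _) (le_max_left _ _))
    intro u
    have := gtt_contract (P.hess z t) (P.hess_symm z t) (P.strong_convex z t)
      (P.hess_bound z t) hγ u
    simpa using this
  exact gtt_lip_fderiv hd hb x y

/-- Iterated correction contraction. -/
lemma gmap_iter (t : ℝ) {γ : ℝ} (hγ : 0 ≤ γ) (τ : ℕ) (z : EuclideanSpace ℝ (Fin n)) :
    ‖(fun y => y - γ • P.grad y t)^[τ] z - P.xstar t‖ ≤
      (max |1 - γ * P.m| |1 - γ * P.L|) ^ τ * ‖z - P.xstar t‖ := by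
  set ρ := max |1 - γ * P.m| |1 - γ * P.L| with hρ
  have hρ0 : 0 ≤ ρ := le_trans (abs_nonneg _) (le_max_left _ _)
  induction τ with
  | zero => simp
  | succ k ih =>
    rw [Function.iterate_succ_apply']
    set w := (fun y => y - γ • P.grad y t)^[k] z with hw
    have hfix : P.xstar t - γ • P.grad (P.xstar t) t = P.xstar t := by
      rw [P.xstar_grad t]; simp
    have h1 : ‖(w - γ • P.grad w t) - P.xstar t‖ ≤ ρ * ‖w - P.xstar t‖ := by
      calc ‖(w - γ • P.grad w t) - P.xstar t‖
          = ‖(w - γ • P.grad w t) - (P.xstar t - γ • P.grad (P.xstar t) t)‖ := by rw [hfix]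
        _ ≤ ρ * ‖w - P.xstar t‖ := P.gmap_lip t hγ (P.xstar t) w
    calc ‖(w - γ • P.grad w t) - P.xstar t‖ ≤ ρ * ‖w - P.xstar t‖ := h1
      _ ≤ ρ * (ρ ^ k * ‖z - P.xstar t‖) := mul_le_mul_of_nonneg_left ih hρ0
      _ = ρ ^ (k + 1) * ‖z - P.xstar t‖ := by ring

/-- Lipschitz bound for the prediction direction. -/
lemma pdir_lip (t : ℝ) (x y : EuclideanSpace ℝ (Fin n)) :
    ‖P.hessInv y t (P.dtgrad y t) - P.hessInv x t (P.dtgrad x t)‖ ≤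
      (P.C0 * P.C1 / P.m ^ 2 + P.C2 / P.m) * ‖y - x‖ := by
  have hm := P.m_pos
  have hid : P.hessInv y t (P.dtgrad x t) - P.hessInv x t (P.dtgrad x t) =
      P.hessInv y t ((P.hess x t - P.hess y t) (P.hessInv x t (P.dtgrad x t))) := by
    rw [ContinuousLinearMap.sub_apply, map_sub]
    rw [P.hess_apply_inv, P.inv_apply_hess]
  have hsplit : P.hessInv y t (P.dtgrad y t) - P.hessInv x t (P.dtgrad x t) =
      P.hessInv y t (P.dtgrad y t - P.dtgrad x t) +
        (P.hessInv y t (P.dtgrad x t) - P.hessInv x t (P.dtgrad x t)) := by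
    rw [map_sub]; abel
  rw [hsplit]
  have h1 : ‖P.hessInv y t (P.dtgrad y t - P.dtgrad x t)‖ ≤ (1 / P.m) * (P.C2 * ‖y - x‖) := by
    calc ‖P.hessInv y t (P.dtgrad y t - P.dtgrad x t)‖
        ≤ ‖P.hessInv y t‖ * ‖P.dtgrad y t - P.dtgrad x t‖ := (P.hessInv y t).le_opNorm _
      _ ≤ (1 / P.m) * (P.C2 * ‖y - x‖) := by
          apply mul_le_mul (P.hessInv_norm y t) (P.dtgrad_lip_x t x y) (norm_nonneg _)
            (by positivity)
  have h2 : ‖P.hessInv y t (P.dtgrad x t) - P.hessInv x t (P.dtgrad x t)‖ ≤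
      (1 / P.m) * (P.C1 * ‖y - x‖ * ((1 / P.m) * P.C0)) := by
    rw [hid]
    have ha : ‖P.hessInv x t (P.dtgrad x t)‖ ≤ (1 / P.m) * P.C0 := by
      calc ‖P.hessInv x t (P.dtgrad x t)‖ ≤ ‖P.hessInv x t‖ * ‖P.dtgrad x t‖ :=
            (P.hessInv x t).le_opNorm _
        _ ≤ (1 / P.m) * P.C0 := by
            apply mul_le_mul (P.hessInv_norm x t) (P.dtgrad_bound x t) (norm_nonneg _)
              (by positivity)
    have hb : ‖(P.hess x t - P.hess y t) (P.hessInv x t (P.dtgrad x t))‖ ≤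
        P.C1 * ‖y - x‖ * ((1 / P.m) * P.C0) := by
      calc ‖(P.hess x t - P.hess y t) (P.hessInv x t (P.dtgrad x t))‖
          ≤ ‖P.hess x t - P.hess y t‖ * ‖P.hessInv x t (P.dtgrad x t)‖ :=
            (P.hess x t - P.hess y t).le_opNorm _
        _ ≤ P.C1 * ‖y - x‖ * ((1 / P.m) * P.C0) := by
            have hC0 := P.C0_nonneg
            have hC1 := P.C1_nonneg
            apply mul_le_mul _ ha (norm_nonneg _) (by positivity)
            · have := P.hess_lip_x t y x
              rwa [norm_sub_rev x y] at this
    calc ‖P.hessInv y t ((P.hess x t - P.hess y t) (P.hessInv x t (P.dtgrad x t)))‖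
        ≤ ‖P.hessInv y t‖ * ‖(P.hess x t - P.hess y t) (P.hessInv x t (P.dtgrad x t))‖ :=
          (P.hessInv y t).le_opNorm _
      _ ≤ (1 / P.m) * (P.C1 * ‖y - x‖ * ((1 / P.m) * P.C0)) := by
          apply mul_le_mul (P.hessInv_norm y t) hb (norm_nonneg _) (by positivity)
  calc ‖P.hessInv y t (P.dtgrad y t - P.dtgrad x t) +
        (P.hessInv y t (P.dtgrad x t) - P.hessInv x t (P.dtgrad x t))‖
      ≤ ‖P.hessInv y t (P.dtgrad y t - P.dtgrad x t)‖ +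
        ‖P.hessInv y t (P.dtgrad x t) - P.hessInv x t (P.dtgrad x t)‖ := norm_add_le _ _
    _ ≤ (1 / P.m) * (P.C2 * ‖y - x‖) + (1 / P.m) * (P.C1 * ‖y - x‖ * ((1 / P.m) * P.C0)) := by
        linarith
    _ = (P.C0 * P.C1 / P.m ^ 2 + P.C2 / P.m) * ‖y - x‖ := by
        field_simp
        ring

set_option maxHeartbeats 1000000 in
/-- Key prediction estimate: the gradient after one prediction step. -/
lemma pred_err {h : ℝ} (hh : 0 < h) (t : ℝ) (a : EuclideanSpace ℝ (Fin n)) :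
    ‖P.grad (a - h • P.hessInv a t (P.dtgrad a t)) (t + h)‖ ≤
      ‖P.grad a t‖ + h ^ 2 / 2 * (P.C0 ^ 2 * P.C1 / P.m ^ 2 + 2 * P.C0 * P.C2 / P.m + P.C3) := by
  have hm := P.m_pos
  have hC0 := P.C0_nonneg
  have hC1 := P.C1_nonneg
  have hC2 := P.C2_nonneg
  have hC3 := P.C3_nonneg
  set Δ : EuclideanSpace ℝ (Fin n) := -(h • P.hessInv a t (P.dtgrad a t)) with hΔdef
  set b : EuclideanSpace ℝ (Fin n) := a + Δ with hbdef
  have hba : a - h • P.hessInv a t (P.dtgrad a t) = b := by rw [hbdef, hΔdef]; abel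
  rw [hba]
  have hΔnorm : ‖Δ‖ ≤ h * P.C0 / P.m := by
    rw [hΔdef, norm_neg, norm_smul, Real.norm_eq_abs, abs_of_pos hh]
    have h1 : ‖P.hessInv a t (P.dtgrad a t)‖ ≤ (1 / P.m) * P.C0 := by
      calc ‖P.hessInv a t (P.dtgrad a t)‖ ≤ ‖P.hessInv a t‖ * ‖P.dtgrad a t‖ :=
            (P.hessInv a t).le_opNorm _
        _ ≤ (1 / P.m) * P.C0 :=
            mul_le_mul (P.hessInv_norm a t) (P.dtgrad_bound a t) (norm_nonneg _) (by positivity)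
    calc h * ‖P.hessInv a t (P.dtgrad a t)‖ ≤ h * ((1 / P.m) * P.C0) :=
          mul_le_mul_of_nonneg_left h1 hh.le
      _ = h * P.C0 / P.m := by ring
  have hHΔ : P.hess a t Δ + h • P.dtgrad a t = 0 := by
    rw [hΔdef, map_neg, map_smul, P.hess_apply_inv]
    abel
  -- T1 : second-order Taylor in x
  have hT1 : ‖P.grad b (t + h) - P.grad a (t + h) - P.hess a (t + h) Δ‖ ≤
      P.C1 * ‖Δ‖ ^ 2 / 2 := by
    set c : ℝ → EuclideanSpace ℝ (Fin n) := fun u => a + u • Δ with hc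
    have hcd : ∀ u : ℝ, HasDerivAt c Δ u := by
      intro u
      have h1 : HasDerivAt (fun u : ℝ => u • Δ) ((1:ℝ) • Δ) u := (hasDerivAt_id u).smul_const Δ
      rw [one_smul] at h1
      exact h1.const_add _
    have hfd : ∀ u : ℝ, HasDerivAt (fun u => P.grad (c u) (t + h)) (P.hess (c u) (t + h) Δ) u :=
      fun u => (P.hess_spec (c u) (t + h)).comp_hasDerivAt u (hcd u)
    have hcont : Continuous fun u => P.hess (c u) (t + h) Δ := by
      have h1 : Continuous fun u => P.hess (c u) (t + h) := by
        have : Differentiable ℝ fun z => P.hess z (t + h) :=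
          fun z => (P.d3_spec z (t + h)).differentiableAt
        exact this.continuous.comp (by continuity)
      exact h1.clm_apply continuous_const
    have hb2 : ∀ u ∈ Set.Icc (0:ℝ) 1,
        ‖P.hess (c u) (t + h) Δ - P.hess (c 0) (t + h) Δ‖ ≤ (P.C1 * ‖Δ‖ ^ 2) * (u - 0) := by
      intro u hu
      have hdi : P.hess (c u) (t + h) Δ - P.hess (c 0) (t + h) Δ =
          (P.hess (c u) (t + h) - P.hess (c 0) (t + h)) Δ := by
        rw [ContinuousLinearMap.sub_apply]
      rw [hdi]
      calc ‖(P.hess (c u) (t + h) - P.hess (c 0) (t + h)) Δ‖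
          ≤ ‖P.hess (c u) (t + h) - P.hess (c 0) (t + h)‖ * ‖Δ‖ :=
            (P.hess (c u) (t + h) - P.hess (c 0) (t + h)).le_opNorm _
        _ ≤ P.C1 * ‖c u - c 0‖ * ‖Δ‖ :=
            mul_le_mul_of_nonneg_right (P.hess_lip_x (t + h) (c 0) (c u)) (norm_nonneg _)
        _ = P.C1 * ‖u • Δ‖ * ‖Δ‖ := by
            rw [hc]; simp
        _ ≤ (P.C1 * ‖Δ‖ ^ 2) * (u - 0) := by
            rw [norm_smul, Real.norm_eq_abs, abs_of_nonneg hu.1]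
            ring_nf
            nlinarith [norm_nonneg Δ, sq_nonneg (u * ‖Δ‖)]
    have := gtt_taylor2 hfd hcont (by norm_num : (0:ℝ) ≤ 1) (by positivity) hb2
    simp only [sub_zero, one_smul] at this
    have hc1 : c 1 = b := by rw [hc, hbdef]; simp
    have hc0 : c 0 = a := by rw [hc]; simp
    rw [hc1, hc0] at this
    calc ‖P.grad b (t + h) - P.grad a (t + h) - P.hess a (t + h) Δ‖
        ≤ P.C1 * ‖Δ‖ ^ 2 * 1 ^ 2 / 2 := this
      _ = P.C1 * ‖Δ‖ ^ 2 / 2 := by ring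
  -- T2 : hessian time variation
  have hT2 : ‖P.hess a (t + h) Δ - P.hess a t Δ‖ ≤ P.C2 * h * ‖Δ‖ := by
    have hdi : P.hess a (t + h) Δ - P.hess a t Δ = (P.hess a (t + h) - P.hess a t) Δ := by
      rw [ContinuousLinearMap.sub_apply]
    rw [hdi]
    calc ‖(P.hess a (t + h) - P.hess a t) Δ‖
        ≤ ‖P.hess a (t + h) - P.hess a t‖ * ‖Δ‖ :=
          (P.hess a (t + h) - P.hess a t).le_opNorm _
      _ ≤ (P.C2 * |t + h - t|) * ‖Δ‖ :=
          mul_le_mul_of_nonneg_right (P.hess_lip_t a (t + h) t) (norm_nonneg _)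
      _ = P.C2 * h * ‖Δ‖ := by
          rw [show t + h - t = h by ring, abs_of_pos hh]
  -- T3 : second-order Taylor in t
  have hT3 : ‖P.grad a (t + h) - P.grad a t - h • P.dtgrad a t‖ ≤ P.C3 * h ^ 2 / 2 := by
    have hcont : Continuous fun s => P.dtgrad a s := by
      have : Differentiable ℝ fun s => P.dtgrad a s := fun s => (P.dttgrad_spec a s).differentiableAt
      exact this.continuous
    have hb3 : ∀ s ∈ Set.Icc t (t + h), ‖P.dtgrad a s - P.dtgrad a t‖ ≤ P.C3 * (s - t) := by
      intro s hs
      have := P.dtgrad_lip_t a s t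
      rwa [abs_of_nonneg (by linarith [hs.1])] at this
    have := gtt_taylor2 (fun s => P.dtgrad_spec a s) hcont (by linarith : t ≤ t + h) hC3 hb3
    have h2 : t + h - t = h := by ring
    rw [h2] at this
    convert this using 2
  -- combine
  have hsplit : P.grad b (t + h) =
      (P.grad b (t + h) - P.grad a (t + h) - P.hess a (t + h) Δ) +
        (P.hess a (t + h) Δ - P.hess a t Δ) +
        (P.grad a (t + h) - P.grad a t - h • P.dtgrad a t) +
        P.grad a t + (P.hess a t Δ + h • P.dtgrad a t) := by
    abel
  rw [hsplit, hHΔ, add_zero]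
  have hΔsq : ‖Δ‖ ^ 2 ≤ (h * P.C0 / P.m) ^ 2 := by
    apply pow_le_pow_left₀ (norm_nonneg _) hΔnorm
  calc ‖(P.grad b (t + h) - P.grad a (t + h) - P.hess a (t + h) Δ) +
        (P.hess a (t + h) Δ - P.hess a t Δ) +
        (P.grad a (t + h) - P.grad a t - h • P.dtgrad a t) + P.grad a t‖
      ≤ ‖(P.grad b (t + h) - P.grad a (t + h) - P.hess a (t + h) Δ) +
          (P.hess a (t + h) Δ - P.hess a t Δ) +
          (P.grad a (t + h) - P.grad a t - h • P.dtgrad a t)‖ + ‖P.grad a t‖ := norm_add_le _ _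
    _ ≤ (‖(P.grad b (t + h) - P.grad a (t + h) - P.hess a (t + h) Δ) +
          (P.hess a (t + h) Δ - P.hess a t Δ)‖ +
          ‖P.grad a (t + h) - P.grad a t - h • P.dtgrad a t‖) + ‖P.grad a t‖ := by
        gcongr
        exact norm_add_le _ _
    _ ≤ ((‖P.grad b (t + h) - P.grad a (t + h) - P.hess a (t + h) Δ‖ +
          ‖P.hess a (t + h) Δ - P.hess a t Δ‖) +
          ‖P.grad a (t + h) - P.grad a t - h • P.dtgrad a t‖) + ‖P.grad a t‖ := by
        gcongr
        exact norm_add_le _ _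
    _ ≤ ((P.C1 * ‖Δ‖ ^ 2 / 2 + P.C2 * h * ‖Δ‖) + P.C3 * h ^ 2 / 2) + ‖P.grad a t‖ := by
        gcongr
    _ ≤ ((P.C1 * (h * P.C0 / P.m) ^ 2 / 2 + P.C2 * h * (h * P.C0 / P.m)) + P.C3 * h ^ 2 / 2) +
          ‖P.grad a t‖ := by
        gcongr
    _ = ‖P.grad a t‖ + h ^ 2 / 2 * (P.C0 ^ 2 * P.C1 / P.m ^ 2 + 2 * P.C0 * P.C2 / P.m + P.C3) := by
        field_simp
        ring
end TVOpt
end GTTlemmas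
section GTTfinal
open Filter Set Topology

lemma gtt_limsup_rec {e : ℕ → ℝ} (he0 : ∀ k, 0 ≤ e k) {β c : ℝ} (hβ0 : 0 ≤ β) (hβ1 : β < 1)
    (hc : 0 ≤ c) (hrec : ∀ k, e (k + 1) ≤ β * e k + c) :
    Filter.limsup e Filter.atTop ≤ c / (1 - β) := by
  have h1β : 0 < 1 - β := by linarith
  have key : ∀ k, e k ≤ β ^ k * e 0 + c / (1 - β) := by
    intro k
    induction k with
    | zero =>
      have h2 : 0 ≤ c / (1 - β) := by positivity
      have h3 : e 0 ≤ e 0 + c / (1 - β) := le_add_of_nonneg_right h2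
      simpa using h3
    | succ k ih =>
      calc e (k + 1) ≤ β * e k + c := hrec k
        _ ≤ β * (β ^ k * e 0 + c / (1 - β)) + c := by nlinarith
        _ = β ^ (k + 1) * e 0 + (β * (c / (1 - β)) + c) := by ring
        _ = β ^ (k + 1) * e 0 + c / (1 - β) := by
            congr 1
            field_simp
            ring
  have htend : Filter.Tendsto (fun k : ℕ => β ^ k * e 0 + c / (1 - β)) Filter.atTop
      (nhds (0 * e 0 + c / (1 - β))) :=
    ((tendsto_pow_atTop_nhds_zero_of_lt_one hβ0 hβ1).mul_const (e 0)).add_const _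
  have hlim : Filter.limsup (fun k : ℕ => β ^ k * e 0 + c / (1 - β)) Filter.atTop
      = 0 * e 0 + c / (1 - β) := htend.limsup_eq
  have hle := Filter.limsup_le_limsup (Filter.Eventually.of_forall key)
    (Filter.isCoboundedUnder_le_of_le Filter.atTop he0)
    htend.isBoundedUnder_le
  rw [hlim] at hle
  simpa using hle

end GTTfinal

/-- **Corollary 1, part b.** If `ρ^τ·σ < 1`, the GTT iterates have an
asymptotic tracking error of order `O(h²)`. -/
theorem gtt_asymptotic_error_Oh2 (n : ℕ) (P : TVOpt n) (h : ℝ) (hh : 0 < h)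
    (γ : ℝ) (τ : ℕ) (hτ : 1 ≤ τ) (hγ0 : 0 < γ) (hγL : γ < 2 / P.L)
    (ρ : ℝ) (hρ : ρ = max |1 - γ * P.m| |1 - γ * P.L|)
    (σ : ℝ) (hσ : σ = 1 + h * (P.C0 * P.C1 / P.m ^ 2 + P.C2 / P.m))
    (hsmall : ρ ^ τ * σ < 1)
    (x : ℕ → EuclideanSpace ℝ (Fin n))
    (hrec : ∀ k : ℕ, x (k + 1) =
      (fun y => y - γ • P.grad y (((k : ℝ) + 1) * h))^[τ]
        (x k - h • P.hessInv (x k) ((k : ℝ) * h) (P.dtgrad (x k) ((k : ℝ) * h)))) :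
    Filter.limsup (fun k : ℕ => ‖x k - P.xstar ((k : ℝ) * h)‖) Filter.atTop ≤
      ρ ^ τ * h ^ 2 / (2 * (1 - ρ ^ τ * σ)) *
        (P.C0 ^ 2 * P.C1 / P.m ^ 3 + 2 * P.C0 * P.C2 / P.m ^ 2 + P.C3 / P.m) := by
  have hm := P.m_pos
  have hC0 := P.C0_nonneg
  have hC1 := P.C1_nonneg
  have hC2 := P.C2_nonneg
  have hC3 := P.C3_nonneg
  have hρ0 : 0 ≤ ρ := by rw [hρ]; exact le_trans (abs_nonneg _) (le_max_left _ _)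
  have hγ0' : (0:ℝ) ≤ γ := hγ0.le
  set K : ℝ := P.C0 ^ 2 * P.C1 / P.m ^ 3 + 2 * P.C0 * P.C2 / P.m ^ 2 + P.C3 / P.m with hK
  have hKnn : 0 ≤ K := by rw [hK]; positivity
  have hσ1 : 1 ≤ σ := by
    rw [hσ]
    have : 0 ≤ h * (P.C0 * P.C1 / P.m ^ 2 + P.C2 / P.m) := by positivity
    linarith
  set β : ℝ := ρ ^ τ * σ with hβ
  have hβ0 : 0 ≤ β := mul_nonneg (pow_nonneg hρ0 τ) (by linarith)
  have hβ1 : β < 1 := hsmall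
  set c : ℝ := ρ ^ τ * (h ^ 2 / 2 * K) with hc
  have hcnn : 0 ≤ c := by
    apply mul_nonneg (pow_nonneg hρ0 τ)
    positivity
  set e : ℕ → ℝ := fun k => ‖x k - P.xstar ((k : ℝ) * h)‖ with he
  have hrec2 : ∀ k, e (k + 1) ≤ β * e k + c := by
    intro k
    set t0 : ℝ := (k : ℝ) * h with ht0
    set t1 : ℝ := ((k : ℝ) + 1) * h with ht1def
    have ht1 : t1 = t0 + h := by rw [ht1def, ht0]; ring
    set a : EuclideanSpace ℝ (Fin n) := P.xstar t0 with ha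
    set w : EuclideanSpace ℝ (Fin n) :=
      x k - h • P.hessInv (x k) t0 (P.dtgrad (x k) t0) with hw
    set wstar : EuclideanSpace ℝ (Fin n) :=
      a - h • P.hessInv a t0 (P.dtgrad a t0) with hwstar
    have hek : e k = ‖x k - a‖ := rfl
    have hPlip : ‖w - wstar‖ ≤ σ * e k := by
      have hsplit : w - wstar = (x k - a) -
          h • (P.hessInv (x k) t0 (P.dtgrad (x k) t0) - P.hessInv a t0 (P.dtgrad a t0)) := by
        rw [hw, hwstar, smul_sub]
        abel
      rw [hsplit]
      calc ‖(x k - a) - h • (P.hessInv (x k) t0 (P.dtgrad (x k) t0) -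
              P.hessInv a t0 (P.dtgrad a t0))‖
          ≤ ‖x k - a‖ + ‖h • (P.hessInv (x k) t0 (P.dtgrad (x k) t0) -
              P.hessInv a t0 (P.dtgrad a t0))‖ := norm_sub_le _ _
        _ ≤ ‖x k - a‖ + h * ((P.C0 * P.C1 / P.m ^ 2 + P.C2 / P.m) * ‖x k - a‖) := by
            rw [norm_smul, Real.norm_eq_abs, abs_of_pos hh]
            have := P.pdir_lip t0 a (x k)
            gcongr
        _ = σ * e k := by rw [hσ, hek]; ring
    have hPtay : ‖wstar - P.xstar t1‖ ≤ h ^ 2 / 2 * K := by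
      have h1 := P.dist_le_grad wstar t1
      have h2 := P.pred_err hh t0 a
      rw [ha, P.xstar_grad t0, norm_zero, zero_add] at h2
      rw [← ht1] at h2
      calc ‖wstar - P.xstar t1‖ ≤ ‖P.grad wstar t1‖ / P.m := h1
        _ ≤ (h ^ 2 / 2 * (P.C0 ^ 2 * P.C1 / P.m ^ 2 + 2 * P.C0 * P.C2 / P.m + P.C3)) / P.m := by
            gcongr
        _ = h ^ 2 / 2 * K := by
            rw [hK]
            field_simp
    have hiter := P.gmap_iter t1 hγ0' τ w
    have hx1 : x (k + 1) = (fun y => y - γ • P.grad y t1)^[τ] w := hrec k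
    have hcast : e (k + 1) = ‖x (k + 1) - P.xstar t1‖ := by
      rw [he, ht1def]
      push_cast
      ring_nf
    rw [hcast, hx1]
    calc ‖(fun y => y - γ • P.grad y t1)^[τ] w - P.xstar t1‖
        ≤ (max |1 - γ * P.m| |1 - γ * P.L|) ^ τ * ‖w - P.xstar t1‖ := hiter
      _ = ρ ^ τ * ‖w - P.xstar t1‖ := by rw [hρ]
      _ ≤ ρ ^ τ * (‖w - wstar‖ + ‖wstar - P.xstar t1‖) := by
          apply mul_le_mul_of_nonneg_left _ (pow_nonneg hρ0 τ)
          exact norm_sub_le_norm_sub_add_norm_sub _ _ _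
      _ ≤ ρ ^ τ * (σ * e k + h ^ 2 / 2 * K) := by
          apply mul_le_mul_of_nonneg_left _ (pow_nonneg hρ0 τ)
          exact add_le_add hPlip hPtay
      _ = β * e k + c := by rw [hβ, hc]; ring
  have hfinal := gtt_limsup_rec (e := e) (fun k => norm_nonneg _) hβ0 hβ1 hcnn hrec2
  have hrw : c / (1 - β) = ρ ^ τ * h ^ 2 / (2 * (1 - ρ ^ τ * σ)) * K := by
    rw [hc, hβ]
    have h1β : (0:ℝ) < 1 - ρ ^ τ * σ := by linarith [hsmall]
    field_simp
  rw [hrw] at hfinal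
  exact hfinal
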